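/- Let n ≥ 2, let p,q ∈ ℝⁿ, let v,w ∈ ℝⁿ be unit vectors, and let Λ > 0. Then the class C(p,q;v,w;Λ) is nonempty and contains a curve of minimal length: there exists γ₀ ∈ C(p,q;v,w;Λ) such that the length of γ₀ is less than or equal to the length of γ for every γ ∈ C(p,q;v,w;Λ). -/

import Mathlib

open Set Filter MeasureTheory
open scoped RealInnerProductSpace Topology ENNReal

noncomputable section

/-- Euclidean space `ℝⁿ`. -/
abbrev Euc (n : ℕ) := EuclideanSpace ℝ (Fin n)

/-- Generalized curvature `κγ(s)` of a curve with derivative `γd` and parameter domain `D`: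
the limsup, as `x, y → s` with `x ≠ y`, of `∠(γd x, γd y) / |x - y|`, expressed as the
infimum of all eventual bounds. -/
def curvAt {n : ℕ} (γd : ℝ → Euc n) (D : Set ℝ) (s : ℝ) : ℝ :=
  sInf {Λ : ℝ | 0 ≤ Λ ∧ ∃ δ > 0, ∀ x ∈ D, ∀ y ∈ D, x ≠ y →
    |x - s| < δ → |y - s| < δ →
    InnerProductGeometry.angle (γd x) (γd y) ≤ Λ * |x - y|}

/-- `κγ(s) < Λ`: there are `δ > 0` and `Λ' < Λ` bounding the angle dilation near `s`. -/
def CurvLt {n : ℕ} (γd : ℝ → Euc n) (D : Set ℝ) (s Λ : ℝ) : Prop :=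
  ∃ δ > 0, ∃ Λ' < Λ, ∀ x ∈ D, ∀ y ∈ D, x ≠ y → |x - s| < δ → |y - s| < δ →
    InnerProductGeometry.angle (γd x) (γd y) ≤ Λ' * |x - y|

/-- `f` restricted to `[a, c]` is a planar circular arc of radius `1/Λ`
of length in `[0, 2π/Λ)`. -/
def IsArc {n : ℕ} (Λ : ℝ) (f : ℝ → Euc n) (a c : ℝ) : Prop :=
  c - a < 2 * Real.pi / Λ ∧
  ∃ (o u e : Euc n) (s₁ : ℝ), ‖u‖ = 1 ∧ ‖e‖ = 1 ∧ ⟪u, e⟫ = 0 ∧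
    ∀ s ∈ Icc a c,
      f s = o + (Λ⁻¹ * Real.cos (Λ * (s - s₁))) • u + (Λ⁻¹ * Real.sin (Λ * (s - s₁))) • e

/-- `f` restricted to `[a, c]` is a planar circular arc of radius `r`. -/
def IsArcR {n : ℕ} (r : ℝ) (f : ℝ → Euc n) (a c : ℝ) : Prop :=
  ∃ (o u e : Euc n) (s₁ : ℝ), ‖u‖ = 1 ∧ ‖e‖ = 1 ∧ ⟪u, e⟫ = 0 ∧
    ∀ s ∈ Icc a c,
      f s = o + (r * Real.cos ((s - s₁) / r)) • u + (r * Real.sin ((s - s₁) / r)) • e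

/-- `O_p(v, r)`: the union of the open balls of radius `r` tangent to `v^⊥` at `p`. -/
def Odisk {n : ℕ} (p v : Euc n) (r : ℝ) : Set (Euc n) :=
  {x | ∃ w : Euc n, ‖w‖ = 1 ∧ ⟪w, v⟫ = 0 ∧ ‖x - p - r • w‖ < r}

/-- Ball radius `R_O` of the curve `f` (with derivative/tangent field `γd`) on domain `D`. -/
def RO {n : ℕ} (f γd : ℝ → Euc n) (D : Set ℝ) : ℝ :=
  sInf {r : ℝ | 0 < r ∧ ∃ s ∈ D, ∃ t ∈ D, ∃ w : Euc n,
    ‖w‖ = 1 ∧ ⟪w, γd s⟫ = 0 ∧ ‖f t - f s - r • w‖ < r}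

/-- Minimal double critical distance of the curve `f` with tangent field `γd`. -/
def MDC {n : ℕ} (f γd : ℝ → Euc n) : ℝ :=
  sInf {d : ℝ | ∃ x y : ℝ, f x ≠ f y ∧ ⟪f x - f y, γd x⟫ = 0 ∧
    ⟪f x - f y, γd y⟫ = 0 ∧ d = ‖f x - f y‖}

/-- Normal injectivity radius `i(K, ℝⁿ)` of the curve `f` with tangent field `γd`. -/
def injRad {n : ℕ} (f γd : ℝ → Euc n) : ℝ :=
  sSup ({0} ∪ {r : ℝ | 0 < r ∧ ∀ s t : ℝ, ∀ u w : Euc n,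
    ⟪u, γd s⟫ = 0 → ⟪w, γd t⟫ = 0 → ‖u‖ < r → ‖w‖ < r →
    f s + u = f t + w → f s = f t ∧ u = w})

/-- A knot: a simple closed unit-speed `C^{1,1}` curve, as an `L`-periodic map `ℝ → ℝⁿ`,
injective on `[0, L)`, with `‖γ'‖ ≡ 1` and `γ'` Lipschitz. -/
structure Knot (n : ℕ) where
  L : ℝ
  Lpos : 0 < L
  f : ℝ → Euc n
  fd : ℝ → Euc n
  per : ∀ s, f (s + L) = f s
  perd : ∀ s, fd (s + L) = fd s
  deriv : ∀ s, HasDerivAt f (fd s) s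
  unit : ∀ s, ‖fd s‖ = 1
  lipd : ∃ C : NNReal, LipschitzWith C fd
  inj : InjOn f (Ico 0 L)

/-- Ropelength `ℓ_e(γ) = L / R_O(K)`. -/
def Knot.ropelength {n : ℕ} (k : Knot n) : ℝ := k.L / RO k.f k.fd univ

/-- The set `I_c` of parameters realizing the minimal double critical distance. -/
def Knot.Ic {n : ℕ} (k : Knot n) : Set ℝ :=
  {x | ∃ y : ℝ, k.f x ≠ k.f y ∧ ⟪k.f x - k.f y, k.fd x⟫ = 0 ∧
    ⟪k.f x - k.f y, k.fd y⟫ = 0 ∧ ‖k.f x - k.f y‖ = MDC k.f k.fd}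

/-- `sup_s κγ(s)` for a knot. -/
def Knot.supCurv {n : ℕ} (k : Knot n) : ℝ := ⨆ s : ℝ, curvAt k.fd univ s

/-- Analytic focal distance `F_k(γ) = (sup_s κγ(s))⁻¹`. -/
def Knot.Fk {n : ℕ} (k : Knot n) : ℝ := (k.supCurv)⁻¹

/-- Two knots are in the same knot class: after rescaling their domains to `ℝ/ℤ`
(realized by `1`-periodic maps `ℝ → ℝⁿ`), they are joined by a continuous homotopy
through injective loops. -/
def SameKnotClass {n : ℕ} (k₁ k₂ : Knot n) : Prop :=
  ∃ H : ℝ → ℝ → Euc n,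
    ContinuousOn (fun z : ℝ × ℝ => H z.1 z.2) (Icc 0 1 ×ˢ univ) ∧
    (∀ t s, H t (s + 1) = H t s) ∧
    (∀ s, H 0 s = k₁.f (k₁.L * s)) ∧
    (∀ s, H 1 s = k₂.f (k₂.L * s)) ∧
    ∀ t ∈ Icc (0 : ℝ) 1, InjOn (H t) (Ico 0 1)

/-- A knot is relatively extremal: a relative minimum of ropelength within its knot class
with respect to the `C¹` topology (on rescaled parametrizations). -/
def RelativelyExtremal {n : ℕ} (k : Knot n) : Prop :=
  ∃ ε > 0, ∀ η : Knot n, SameKnotClass k η →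
    (∀ s : ℝ, ‖η.f (η.L * s) - k.f (k.L * s)‖ +
      ‖η.L • η.fd (η.L * s) - k.L • k.fd (k.L * s)‖ < ε) →
    k.ropelength ≤ η.ropelength

/-- The class `C(p, q; v, w; Λ)`: unit-speed `C^{1,1}` curves `γ : [0, L] → ℝⁿ`
(`L` not fixed) from `p` to `q` with initial/terminal directions `v, w`
and `Λ`-Lipschitz derivative (curvature at most `Λ`). -/
structure CurveCC (n : ℕ) (p q v w : Euc n) (Λ : ℝ) where
  L : ℝ
  Lnn : 0 ≤ L
  f : ℝ → Euc n
  fd : ℝ → Euc n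
  deriv : ∀ s ∈ Icc (0 : ℝ) L, HasDerivWithinAt f (fd s) (Icc 0 L) s
  unit : ∀ s ∈ Icc (0 : ℝ) L, ‖fd s‖ = 1
  lip : LipschitzOnWith Λ.toNNReal fd (Icc 0 L)
  i0 : f 0 = p
  id0 : fd 0 = v
  iL : f L = q
  idL : fd L = w

/-- A `C¹` closed curve of period `L` with nowhere-vanishing derivative. -/
structure ClosedC1 (n : ℕ) (L : ℝ) where
  f : ℝ → Euc n
  fd : ℝ → Euc n
  per : ∀ s, f (s + L) = f s
  perd : ∀ s, fd (s + L) = fd s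
  deriv : ∀ s, HasDerivAt f (fd s) s
  nz : ∀ s, fd s ≠ 0

/-- A simple closed `C^{1,1}` curve of period `L` with nowhere-vanishing derivative. -/
structure ClosedC11 (n : ℕ) (L : ℝ) extends ClosedC1 n L where
  lipd : ∃ C : NNReal, LipschitzWith C fd
  inj : InjOn f (Ico 0 L)

/-- The unit tangent field of `c` is `C`-Lipschitz with respect to the arclength of `c`. -/
def TangentLip {n : ℕ} {L : ℝ} (c : ClosedC1 n L) (C : ℝ) : Prop :=
  ∀ x y : ℝ, x ≤ y →
    ‖‖c.fd y‖⁻¹ • c.fd y - ‖c.fd x‖⁻¹ • c.fd x‖ ≤ C * ∫ t in x..y, ‖c.fd t‖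

/-- Pointwise geometric focal distance `F_g(γ(s))` of the curve `f` with domain `D`. -/
def FgPt {n : ℕ} (f fd : ℝ → Euc n) (D : Set ℝ) (s : ℝ) : ℝ :=
  sInf {r : ℝ | 0 < r ∧ f s ∈ closure (Odisk (f s) (fd s) r ∩ (f '' D))}

end

noncomputable section PartA
open scoped BoundedContinuousFunction

variable {n : ℕ} {Λ : ℝ}

lemma norm_eq_one_of_sq {E : Type*} [NormedAddCommGroup E] {x : E} (h : ‖x‖ ^ 2 = 1) :
    ‖x‖ = 1 := by nlinarith [norm_nonneg x]

lemma combo_norm_sq {u e : Euc n} (hu : ‖u‖ = 1) (he : ‖e‖ = 1) (hue : ⟪u, e⟫ = 0)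
    (a b : ℝ) : ‖a • u + b • e‖ ^ 2 = a ^ 2 + b ^ 2 := by
  rw [norm_add_sq_real, norm_smul, norm_smul, real_inner_smul_left, real_inner_smul_right, hue]
  simp [hu, he, mul_pow, sq_abs]

lemma trig_key (A B : ℝ) :
    (Real.cos A - Real.cos B) ^ 2 + (Real.sin A - Real.sin B) ^ 2 ≤ (A - B) ^ 2 := by
  have h1 : Real.cos (A - B) = Real.cos A * Real.cos B + Real.sin A * Real.sin B :=
    Real.cos_sub A B
  have h2 : Real.cos (A - B) = 2 * Real.cos ((A - B) / 2) ^ 2 - 1 := by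
    have := Real.cos_two_mul ((A - B) / 2)
    rw [show 2 * ((A - B) / 2) = A - B by ring] at this
    exact this
  nlinarith [Real.sin_sq_le_sq (x := (A - B) / 2),
    Real.sin_sq_add_cos_sq ((A - B) / 2), Real.sin_sq_add_cos_sq A, Real.sin_sq_add_cos_sq B]

/-- Straight segment. -/
def segC (hΛ : 0 < Λ) (a v : Euc n) (hv : ‖v‖ = 1) (t : ℝ) (ht : 0 ≤ t) :
    CurveCC n a (a + t • v) v v Λ where
  L := t
  Lnn := ht
  f := fun s => a + s • v
  fd := fun _ => v
  deriv := fun s _ => by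
    have h : HasDerivAt (fun s : ℝ => a + s • v) ((1 : ℝ) • v) s :=
      ((hasDerivAt_id s).smul_const v).const_add a
    simpa using h.hasDerivWithinAt
  unit := fun s _ => hv
  lip := by
    rw [lipschitzOnWith_iff_dist_le_mul]
    intro x _ y _
    simp only [dist_self]
    positivity
  i0 := by simp
  id0 := rfl
  iL := rfl
  idL := rfl

/-- Circular arc. -/
def arcC (hΛ : 0 < Λ) (a u e : Euc n) (hu : ‖u‖ = 1) (he : ‖e‖ = 1) (hue : ⟪u, e⟫ = 0)
    (θ : ℝ) (hθ : 0 ≤ θ) :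
    CurveCC n a (a + (Λ⁻¹ * Real.sin θ) • u + (Λ⁻¹ * (1 - Real.cos θ)) • e) u
      (Real.cos θ • u + Real.sin θ • e) Λ where
  L := θ / Λ
  Lnn := div_nonneg hθ hΛ.le
  f := fun s => a + ((Λ⁻¹ * Real.sin (Λ * s)) • u + (Λ⁻¹ * (1 - Real.cos (Λ * s))) • e)
  fd := fun s => Real.cos (Λ * s) • u + Real.sin (Λ * s) • e
  deriv := by
    intro s _
    have h1 : HasDerivAt (fun s : ℝ => Λ * s) Λ s := by
      simpa using (hasDerivAt_id s).const_mul Λ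
    have hsin : HasDerivAt (fun s : ℝ => Real.sin (Λ * s)) (Real.cos (Λ * s) * Λ) s :=
      (Real.hasDerivAt_sin (Λ * s)).comp s h1
    have hcos : HasDerivAt (fun s : ℝ => Real.cos (Λ * s)) (-Real.sin (Λ * s) * Λ) s :=
      (Real.hasDerivAt_cos (Λ * s)).comp s h1
    have h2 : HasDerivAt (fun s : ℝ => Λ⁻¹ * Real.sin (Λ * s))
        (Λ⁻¹ * (Real.cos (Λ * s) * Λ)) s := hsin.const_mul _
    have h3 : HasDerivAt (fun s : ℝ => Λ⁻¹ * (1 - Real.cos (Λ * s)))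
        (Λ⁻¹ * (0 - -Real.sin (Λ * s) * Λ)) s := ((hasDerivAt_const s (1:ℝ)).sub hcos).const_mul _
    have e2 : Λ⁻¹ * (Real.cos (Λ * s) * Λ) = Real.cos (Λ * s) := by field_simp
    have e3 : Λ⁻¹ * (0 - -Real.sin (Λ * s) * Λ) = Real.sin (Λ * s) := by field_simp; ring
    have h4 := ((h2.smul_const u).add (h3.smul_const e)).const_add a
    rw [e2] at h2; rw [e3] at h3
    have h5 := ((h2.smul_const u).add (h3.smul_const e)).const_add a
    exact h5.hasDerivWithinAt
  unit := by
    intro s _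
    exact norm_eq_one_of_sq (by
      rw [combo_norm_sq hu he hue]
      nlinarith [Real.sin_sq_add_cos_sq (Λ * s)])
  lip := by
    rw [lipschitzOnWith_iff_dist_le_mul]
    intro x _ y _
    have hc : (Λ.toNNReal : ℝ) = Λ := Real.coe_toNNReal Λ hΛ.le
    rw [hc, dist_eq_norm, Real.dist_eq]
    have heq : Real.cos (Λ * x) • u + Real.sin (Λ * x) • e -
        (Real.cos (Λ * y) • u + Real.sin (Λ * y) • e) =
        (Real.cos (Λ * x) - Real.cos (Λ * y)) • u +
        (Real.sin (Λ * x) - Real.sin (Λ * y)) • e := by module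
    rw [heq]
    have h1 := combo_norm_sq hu he hue (Real.cos (Λ * x) - Real.cos (Λ * y))
      (Real.sin (Λ * x) - Real.sin (Λ * y))
    have h2 := trig_key (Λ * x) (Λ * y)
    have h3 : (Λ * x - Λ * y) ^ 2 = Λ ^ 2 * |x - y| ^ 2 := by
      rw [sq_abs]; ring
    nlinarith [norm_nonneg ((Real.cos (Λ * x) - Real.cos (Λ * y)) • u +
      (Real.sin (Λ * x) - Real.sin (Λ * y)) • e), abs_nonneg (x - y),
      mul_nonneg hΛ.le (abs_nonneg (x - y))]
  i0 := by simp
  id0 := by simp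
  iL := by
    have hτ : Λ * (θ / Λ) = θ := by field_simp
    simp only [hτ, add_assoc]
  idL := by
    have hτ : Λ * (θ / Λ) = θ := by field_simp
    simp only [hτ]

/-- Concatenation of two curves. -/
def concatC {p m q v u w : Euc n} (hΛ : 0 < Λ)
    (γ₁ : CurveCC n p m v u Λ) (γ₂ : CurveCC n m q u w Λ) : CurveCC n p q v w Λ where
  L := γ₁.L + γ₂.L
  Lnn := add_nonneg γ₁.Lnn γ₂.Lnn
  f := fun s => if s ≤ γ₁.L then γ₁.f s else γ₂.f (s - γ₁.L)
  fd := fun s => if s ≤ γ₁.L then γ₁.fd s else γ₂.fd (s - γ₁.L)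
  deriv := by
    intro s hs
    have hicc : Icc (0:ℝ) (γ₁.L + γ₂.L) = Icc 0 γ₁.L ∪ Icc γ₁.L (γ₁.L + γ₂.L) :=
      (Icc_union_Icc_eq_Icc γ₁.Lnn (le_add_of_nonneg_right γ₂.Lnn)).symm
    rw [hicc]
    have hagree₁ : ∀ x ∈ Icc (0:ℝ) γ₁.L,
        (fun s => if s ≤ γ₁.L then γ₁.f s else γ₂.f (s - γ₁.L)) x = γ₁.f x := by
      intro x hx; simp [hx.2]
    have hagree₂ : ∀ x ∈ Icc γ₁.L (γ₁.L + γ₂.L),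
        (fun s => if s ≤ γ₁.L then γ₁.f s else γ₂.f (s - γ₁.L)) x = γ₂.f (x - γ₁.L) := by
      intro x hx
      rcases lt_or_eq_of_le hx.1 with h | h
      · simp [not_le.mpr h]
      · simp only [← h, le_refl, if_pos, sub_self]
        rw [γ₁.iL, γ₂.i0]
    -- derivative on the left part
    have hleft : HasDerivWithinAt (fun s => if s ≤ γ₁.L then γ₁.f s else γ₂.f (s - γ₁.L))
        (if s ≤ γ₁.L then γ₁.fd s else γ₂.fd (s - γ₁.L)) (Icc 0 γ₁.L) s := by
      by_cases h : s ∈ Icc (0:ℝ) γ₁.L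
      · have := (γ₁.deriv s h).congr hagree₁ (hagree₁ s h)
        rw [if_pos h.2]
        exact this
      · exact hasDerivWithinAt_iff_hasFDerivWithinAt.mpr
          (HasFDerivWithinAt.of_notMem_closure (by rwa [closure_Icc]))
    have hright : HasDerivWithinAt (fun s => if s ≤ γ₁.L then γ₁.f s else γ₂.f (s - γ₁.L))
        (if s ≤ γ₁.L then γ₁.fd s else γ₂.fd (s - γ₁.L)) (Icc γ₁.L (γ₁.L + γ₂.L)) s := by
      by_cases h : s ∈ Icc γ₁.L (γ₁.L + γ₂.L)
      · have hmem : s - γ₁.L ∈ Icc (0:ℝ) γ₂.L := ⟨by linarith [h.1], by linarith [h.2]⟩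
        have hder := γ₂.deriv (s - γ₁.L) hmem
        -- translate
        have htrans : HasDerivWithinAt (fun t => γ₂.f (t - γ₁.L)) (γ₂.fd (s - γ₁.L))
            (Icc γ₁.L (γ₁.L + γ₂.L)) s := by
          have h1 : HasDerivWithinAt (fun t : ℝ => t - γ₁.L) 1 (Icc γ₁.L (γ₁.L + γ₂.L)) s := by
            simpa using ((hasDerivAt_id s).sub_const γ₁.L).hasDerivWithinAt
          have hmaps : MapsTo (fun t : ℝ => t - γ₁.L) (Icc γ₁.L (γ₁.L + γ₂.L))
              (Icc 0 γ₂.L) := by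
            intro t ht
            show t - γ₁.L ∈ Icc (0:ℝ) γ₂.L
            exact ⟨by linarith [ht.1], by linarith [ht.2]⟩
          have := HasDerivWithinAt.scomp (x := s) (hg := hder) (hh := h1) (hst := hmaps)
          rw [one_smul] at this
          exact this
        have := htrans.congr hagree₂ (hagree₂ s h)
        by_cases hsl : s ≤ γ₁.L
        · have hse : s = γ₁.L := le_antisymm hsl h.1
          subst hse
          rw [if_pos le_rfl,
            show γ₁.fd γ₁.L = γ₂.fd (γ₁.L - γ₁.L) from by rw [sub_self, γ₁.idL, γ₂.id0]]
          exact this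
        · rw [if_neg hsl]
          exact this
      · exact hasDerivWithinAt_iff_hasFDerivWithinAt.mpr
          (HasFDerivWithinAt.of_notMem_closure (by rwa [closure_Icc]))
    show HasDerivWithinAt _ (if s ≤ γ₁.L then γ₁.fd s else γ₂.fd (s - γ₁.L)) _ s
    exact hleft.union hright
  unit := by
    intro s hs
    show ‖if s ≤ γ₁.L then γ₁.fd s else γ₂.fd (s - γ₁.L)‖ = 1
    by_cases h : s ≤ γ₁.L
    · rw [if_pos h]; exact γ₁.unit s ⟨hs.1, h⟩
    · rw [if_neg h]
      exact γ₂.unit (s - γ₁.L) ⟨by linarith [not_le.mp h], by linarith [hs.2]⟩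
  lip := by
    rw [lipschitzOnWith_iff_dist_le_mul]
    have hkey : ∀ x ∈ Icc (0:ℝ) (γ₁.L + γ₂.L), ∀ y ∈ Icc (0:ℝ) (γ₁.L + γ₂.L), x ≤ y →
        dist (if x ≤ γ₁.L then γ₁.fd x else γ₂.fd (x - γ₁.L))
          (if y ≤ γ₁.L then γ₁.fd y else γ₂.fd (y - γ₁.L)) ≤ Λ.toNNReal * dist x y := by
      intro x hx y hy hxy
      have l1 := lipschitzOnWith_iff_dist_le_mul.mp γ₁.lip
      have l2 := lipschitzOnWith_iff_dist_le_mul.mp γ₂.lip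
      by_cases h1 : y ≤ γ₁.L
      · rw [if_pos (hxy.trans h1), if_pos h1]
        exact l1 x ⟨hx.1, hxy.trans h1⟩ y ⟨hy.1, h1⟩
      · by_cases h2 : x ≤ γ₁.L
        · rw [if_pos h2, if_neg h1]
          have hL1 : γ₁.L ∈ Icc (0:ℝ) γ₁.L := ⟨γ₁.Lnn, le_refl _⟩
          have hy2 : y - γ₁.L ∈ Icc (0:ℝ) γ₂.L := ⟨by linarith [not_le.mp h1], by linarith [hy.2]⟩
          have t1 := l1 x ⟨hx.1, h2⟩ γ₁.L hL1
          have t2 := l2 0 ⟨le_refl _, γ₂.Lnn⟩ (y - γ₁.L) hy2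
          calc dist (γ₁.fd x) (γ₂.fd (y - γ₁.L))
              ≤ dist (γ₁.fd x) (γ₁.fd γ₁.L) + dist (γ₂.fd 0) (γ₂.fd (y - γ₁.L)) := by
                rw [show γ₁.fd γ₁.L = γ₂.fd 0 by rw [γ₁.idL, γ₂.id0]]
                exact dist_triangle _ _ _
            _ ≤ Λ.toNNReal * dist x γ₁.L + Λ.toNNReal * dist 0 (y - γ₁.L) := add_le_add t1 t2
            _ ≤ Λ.toNNReal * dist x y := by
                rw [Real.dist_eq, Real.dist_eq, Real.dist_eq,
                  abs_of_nonpos (by linarith [not_le.mp h1] : x - γ₁.L ≤ 0),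
                  abs_of_nonpos (by linarith [not_le.mp h1] : (0:ℝ) - (y - γ₁.L) ≤ 0),
                  abs_of_nonpos (by linarith : x - y ≤ 0)]
                have : (0:ℝ) ≤ Λ.toNNReal := (Λ.toNNReal).coe_nonneg
                nlinarith [not_le.mp h1]
        · rw [if_neg h2, if_neg h1]
          have := l2 (x - γ₁.L) ⟨by linarith [not_le.mp h2], by linarith [hx.2]⟩
            (y - γ₁.L) ⟨by linarith [not_le.mp h1], by linarith [hy.2]⟩
          simpa [Real.dist_eq, show x - γ₁.L - (y - γ₁.L) = x - y by ring] using this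
    intro x hx y hy
    rcases le_total x y with h | h
    · exact hkey x hx y hy h
    · rw [dist_comm, dist_comm x y]; exact hkey y hy x hx h
  i0 := by simp [γ₁.Lnn, γ₁.i0]
  id0 := by simp [γ₁.Lnn, γ₁.id0]
  iL := by
    show (if γ₁.L + γ₂.L ≤ γ₁.L then γ₁.f (γ₁.L + γ₂.L) else γ₂.f (γ₁.L + γ₂.L - γ₁.L)) = q
    rcases eq_or_lt_of_le γ₂.Lnn with h | h
    · simp only [← h, add_zero, le_refl, if_pos]
      rw [γ₁.iL, ← γ₂.iL, ← h, γ₂.i0]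
    · rw [if_neg (not_le.mpr (by linarith)), add_sub_cancel_left, γ₂.iL]
  idL := by
    show (if γ₁.L + γ₂.L ≤ γ₁.L then γ₁.fd (γ₁.L + γ₂.L) else γ₂.fd (γ₁.L + γ₂.L - γ₁.L)) = w
    rcases eq_or_lt_of_le γ₂.Lnn with h | h
    · simp only [← h, add_zero, le_refl, if_pos]
      rw [γ₁.idL, ← γ₂.idL, ← h, γ₂.id0]
    · rw [if_neg (not_le.mpr (by linarith)), add_sub_cancel_left, γ₂.idL]

def CurveCC.tr {p q v w : Euc n} (γ : CurveCC n p q v w Λ) {q' w' : Euc n}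
    (hq : q = q') (hw : w = w') : CurveCC n p q' v w' Λ := hq ▸ hw ▸ γ

lemma exists_orth (hn : 2 ≤ n) (x : Euc n) : ∃ u : Euc n, ‖u‖ = 1 ∧ ⟪u, x⟫ = 0 := by
  by_cases hx : x = 0
  · refine ⟨EuclideanSpace.single ⟨0, by omega⟩ (1:ℝ), ?_, by simp [hx]⟩
    simp [EuclideanSpace.norm_single]
  · have hfin : Module.finrank ℝ (ℝ ∙ x) +
        Module.finrank ℝ ((ℝ ∙ x)ᗮ : Submodule ℝ (Euc n)) =
        Module.finrank ℝ (Euc n) := Submodule.finrank_add_finrank_orthogonal _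
    rw [finrank_span_singleton hx, finrank_euclideanSpace, Fintype.card_fin] at hfin
    have hpos : 0 < Module.finrank ℝ ((ℝ ∙ x)ᗮ : Submodule ℝ (Euc n)) := by omega
    obtain ⟨⟨u', hu'mem⟩, hu'⟩ := Module.finrank_pos_iff_exists_ne_zero.mp hpos
    have hu'0 : u' ≠ 0 := by simpa [Submodule.mk_eq_zero] using hu'
    refine ⟨‖u'‖⁻¹ • u', ?_, ?_⟩
    · rw [norm_smul, norm_inv, norm_norm, inv_mul_cancel₀ (norm_ne_zero_iff.mpr hu'0)]
    · have : ⟪u', x⟫ = 0 := by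
        have := (Submodule.mem_orthogonal (ℝ ∙ x) u').mp hu'mem x
          (Submodule.mem_span_singleton_self x)
        rwa [real_inner_comm] at this
      rw [real_inner_smul_left, this, mul_zero]

open Finset in
lemma reach_dir (hΛ : 0 < Λ) (hn : 2 ≤ n) (p v w : Euc n) (hv : ‖v‖ = 1) (hw : ‖w‖ = 1) :
    ∃ p' : Euc n, Nonempty (CurveCC n p p' v w Λ) := by
  set c : ℝ := ⟪v, w⟫ with hc
  have hc1 : |c| ≤ 1 := by
    have := abs_real_inner_le_norm v w
    rwa [hv, hw, mul_one] at this
  by_cases hz : w - c • v = 0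
  · have hw' : w = c • v := by rwa [sub_eq_zero] at hz
    have : |c| = 1 := by
      have := hw
      rw [hw', norm_smul, hv, mul_one, Real.norm_eq_abs] at this
      exact this
    rcases abs_eq (by norm_num : (0:ℝ) ≤ 1) |>.mp this with h1 | h1
    · refine ⟨p, ⟨(segC hΛ p v hv 0 le_rfl).tr (by simp) ?_⟩⟩
      rw [hw', h1, one_smul]
    · obtain ⟨u, hu, huv⟩ := exists_orth hn v
      refine ⟨_, ⟨(arcC hΛ p v u hv hu (by rwa [real_inner_comm] at huv) Real.pi
        Real.pi_pos.le).tr rfl ?_⟩⟩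
      rw [Real.cos_pi, Real.sin_pi, hw', h1]
      module
  · set z := w - c • v with hzdef
    set u : Euc n := ‖z‖⁻¹ • z with hu_def
    have hzn : ‖z‖ ≠ 0 := norm_ne_zero_iff.mpr hz
    have hu : ‖u‖ = 1 := by
      rw [hu_def, norm_smul, norm_inv, norm_norm, inv_mul_cancel₀ hzn]
    have hwv : ⟪w, v⟫ = c := by rw [real_inner_comm]
    have hvu : ⟪v, u⟫ = 0 := by
      rw [hu_def, real_inner_smul_right, hzdef, inner_sub_right, real_inner_smul_right,
        real_inner_self_eq_norm_sq, hv, ← hc]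
      ring
    have hnz_sq : ‖z‖ ^ 2 = 1 - c ^ 2 := by
      rw [hzdef, norm_sub_sq_real, real_inner_smul_right, hwv, norm_smul, hw,
        Real.norm_eq_abs, hv, mul_one, sq_abs]
      ring
    have hsin : Real.sin (Real.arccos c) = ‖z‖ := by
      rw [Real.sin_arccos, ← hnz_sq, Real.sqrt_sq (norm_nonneg _)]
    have hcos : Real.cos (Real.arccos c) = c := Real.cos_arccos (by linarith [abs_le.mp hc1])
      (by linarith [abs_le.mp hc1])
    refine ⟨_, ⟨(arcC hΛ p v u hv hu hvu (Real.arccos c) (Real.arccos_nonneg c)).tr rfl ?_⟩⟩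
    rw [hcos, hsin, hu_def, smul_smul, mul_inv_cancel₀ hzn, one_smul, hzdef]
    module

def quarterC (hΛ : 0 < Λ) (a h u : Euc n) (hh : ‖h‖ = 1) (hu : ‖u‖ = 1) (hhu : ⟪h, u⟫ = 0) :
    CurveCC n a (a + Λ⁻¹ • h + Λ⁻¹ • u) h u Λ :=
  (arcC hΛ a h u hh hu hhu (Real.pi / 2) (by positivity)).tr
    (by rw [Real.sin_pi_div_two, Real.cos_pi_div_two]; ring_nf)
    (by rw [Real.sin_pi_div_two, Real.cos_pi_div_two]; module)

lemma routeR (hΛ : 0 < Λ) (a h e : Euc n) (hh : ‖h‖ = 1) (he : ‖e‖ = 1) (hhe : ⟪h, e⟫ = 0)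
    (m₁ m₂ m₄ : ℝ) (hm1 : 0 ≤ m₁) (hm2 : 0 ≤ m₂) (hm4 : 0 ≤ m₄) :
    Nonempty (CurveCC n a (a + (m₄ - m₂) • h + (4 * Λ⁻¹ + m₁) • e) h h Λ) := by
  have hnh : ‖-h‖ = 1 := by rwa [norm_neg]
  have heh : ⟪e, -h⟫ = 0 := by rw [inner_neg_right, real_inner_comm, hhe, neg_zero]
  have hnhe : ⟪-h, e⟫ = 0 := by rw [inner_neg_left, hhe, neg_zero]
  have heh' : ⟪e, h⟫ = 0 := by rwa [real_inner_comm] at hhe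
  exact ⟨((concatC hΛ (concatC hΛ (concatC hΛ (concatC hΛ (concatC hΛ (concatC hΛ
    (quarterC hΛ a h e hh he hhe)
    (segC hΛ _ e he m₁ hm1))
    (quarterC hΛ _ e (-h) he hnh heh))
    (segC hΛ _ (-h) hnh m₂ hm2))
    (quarterC hΛ _ (-h) e hnh he hnhe))
    (quarterC hΛ _ e h he hh heh'))
    (segC hΛ _ h hh m₄ hm4)).tr (by module) rfl)⟩

lemma reach_same (hΛ : 0 < Λ) (hn : 2 ≤ n) (a h : Euc n) (hh : ‖h‖ = 1) (c : Euc n) :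
    Nonempty (CurveCC n a (a + c) h h Λ) := by
  set α : ℝ := ⟪c, h⟫ with hα
  set z := c - α • h with hzdef
  have hzh : ⟪z, h⟫ = 0 := by
    rw [hzdef, inner_sub_left, real_inner_smul_left, real_inner_self_eq_norm_sq, hh]
    ring
  obtain ⟨e, he, heh, hcsum⟩ : ∃ e : Euc n, ‖e‖ = 1 ∧ ⟪h, e⟫ = 0 ∧ c = α • h + ‖z‖ • e := by
    by_cases hz : z = 0
    · obtain ⟨e, he1, he2⟩ := exists_orth hn h
      refine ⟨e, he1, by rwa [real_inner_comm] at he2, ?_⟩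
      rw [hz, norm_zero, zero_smul, add_zero]
      have : c - α • h = 0 := hz
      linear_combination (norm := module) this
    · refine ⟨‖z‖⁻¹ • z, ?_, ?_, ?_⟩
      · rw [norm_smul, norm_inv, norm_norm, inv_mul_cancel₀ (norm_ne_zero_iff.mpr hz)]
      · rw [real_inner_smul_right, real_inner_comm, hzh, mul_zero]
      · rw [smul_smul, mul_inv_cancel₀ (norm_ne_zero_iff.mpr hz), one_smul, hzdef]
        module
  have hne : ‖-e‖ = 1 := by rwa [norm_neg]
  have hhne : ⟪h, -e⟫ = 0 := by rw [inner_neg_right, heh, neg_zero]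
  obtain ⟨γ₁⟩ := routeR hΛ a h (-e) hh hne hhne 0 0 0 le_rfl le_rfl le_rfl
  obtain ⟨γ₂⟩ := routeR hΛ (a + ((0:ℝ) - 0) • h + (4 * Λ⁻¹ + 0) • (-e)) h e hh he heh
    ‖z‖ (max (-α) 0) (max α 0) (norm_nonneg _) (le_max_right _ _) (le_max_right _ _)
  refine ⟨(concatC hΛ γ₁ γ₂).tr ?_ rfl⟩
  have hmax : max α 0 - max (-α) 0 = α := by
    rcases le_total α 0 with h' | h'
    · rw [max_eq_right h', max_eq_left (by linarith)]; ring
    · rw [max_eq_left h', max_eq_right (by linarith)]; ring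
  rw [hcsum]
  rw [hmax]
  module

lemma exists_curveCC (hΛ : 0 < Λ) (hn : 2 ≤ n) (p q v w : Euc n)
    (hv : ‖v‖ = 1) (hw : ‖w‖ = 1) : Nonempty (CurveCC n p q v w Λ) := by
  obtain ⟨p₁, ⟨γ₁⟩⟩ := reach_dir hΛ hn p v w hv hw
  obtain ⟨γ₂⟩ := reach_same hΛ hn p₁ w hw (q - p₁)
  exact ⟨concatC hΛ γ₁ (γ₂.tr (by abel) rfl)⟩

lemma curve_integral {p q v w : Euc n} (γ : CurveCC n p q v w Λ) :
    ∫ t in (0:ℝ)..γ.L, γ.fd t = q - p := by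
  have hcont : ContinuousOn γ.f (Icc 0 γ.L) := fun s hs => (γ.deriv s hs).continuousWithinAt
  have hfd : ContinuousOn γ.fd (Icc 0 γ.L) := γ.lip.continuousOn
  have hint : IntervalIntegrable γ.fd volume 0 γ.L := by
    apply ContinuousOn.intervalIntegrable
    rwa [uIcc_of_le γ.Lnn]
  have hderiv : ∀ x ∈ Ioo (0:ℝ) γ.L, HasDerivWithinAt γ.f (γ.fd x) (Ioi x) x := by
    intro x hx
    refine (γ.deriv x ⟨hx.1.le, hx.2.le⟩).mono_of_mem_nhdsWithin ?_
    refine mem_nhdsWithin.mpr ⟨Ioo 0 γ.L, isOpen_Ioo, hx, ?_⟩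
    exact fun t ht => ⟨ht.1.1.le, ht.1.2.le⟩
  have h := intervalIntegral.integral_eq_sub_of_hasDeriv_right_of_le γ.Lnn hcont hderiv hint
  rw [h, γ.iL, γ.i0]

lemma clamp_mem {L : ℝ} (hL : 0 ≤ L) (t : ℝ) : max 0 (min t L) ∈ Icc (0:ℝ) L :=
  ⟨le_max_left _ _, max_le hL (min_le_right t L)⟩

lemma clamp_eq {L : ℝ} {t : ℝ} (ht : t ∈ Icc (0:ℝ) L) : max 0 (min t L) = t := by
  rw [min_eq_left ht.2, max_eq_right ht.1]

lemma clamp_lip (L a b : ℝ) : |max 0 (min a L) - max 0 (min b L)| ≤ |a - b| := by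
  rw [max_comm 0 (min a L), max_comm 0 (min b L)]
  refine (abs_max_sub_max_le_abs _ _ _).trans ?_
  refine (abs_min_sub_min_le_max a L b L).trans ?_
  rw [sub_self, abs_zero]
  exact max_le le_rfl (abs_nonneg _)

set_option maxHeartbeats 1000000 in
set_option synthInstance.maxHeartbeats 1000000 in
theorem statement_12' {n : ℕ} (hn : 2 ≤ n) (p q v w : Euc n)
    (hv : ‖v‖ = 1) (hw : ‖w‖ = 1) (Λ : ℝ) (hΛ : 0 < Λ) :
    ∃ γ₀ : CurveCC n p q v w Λ, ∀ γ : CurveCC n p q v w Λ, γ₀.L ≤ γ.L := by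
  classical
  have hcoe : (Λ.toNNReal : ℝ) = Λ := Real.coe_toNNReal Λ hΛ.le
  obtain ⟨γex⟩ := exists_curveCC hΛ hn p q v w hv hw
  set S : Set ℝ := Set.range (fun γ : CurveCC n p q v w Λ => γ.L) with hS
  have hSne : S.Nonempty := ⟨γex.L, ⟨γex, rfl⟩⟩
  have hSbd : BddBelow S := ⟨0, by rintro x ⟨γ, rfl⟩; exact γ.Lnn⟩
  set ℓ := sInf S with hℓdef
  have hℓ0 : 0 ≤ ℓ := le_csInf hSne (by rintro x ⟨γ, rfl⟩; exact γ.Lnn)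
  have hmin : ∀ γ : CurveCC n p q v w Λ, ℓ ≤ γ.L := fun γ => csInf_le hSbd ⟨γ, rfl⟩
  have hseq : ∀ k : ℕ, ∃ γ : CurveCC n p q v w Λ, γ.L < ℓ + 1 / (k + 1) := by
    intro k
    have hlt : ℓ < ℓ + 1 / ((k:ℝ) + 1) := by
      have : (0:ℝ) < 1 / ((k:ℝ) + 1) := by positivity
      linarith
    obtain ⟨x, hx, hxlt⟩ := exists_lt_of_csInf_lt hSne hlt
    obtain ⟨γ, rfl⟩ := hx
    exact ⟨γ, hxlt⟩
  choose Γ hΓ using hseq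
  set M := ℓ + 1 with hMdef
  have hM0 : 0 ≤ M := by linarith
  have hℓM : ℓ ≤ M := by linarith
  have hLM : ∀ k, (Γ k).L ≤ M := by
    intro k
    have h1 : 1 / ((k:ℝ) + 1) ≤ 1 := by
      rw [div_le_one (by positivity)]
      linarith [(Nat.cast_nonneg k : (0:ℝ) ≤ (k:ℝ))]
    linarith [hΓ k]
  -- the clamped tangent fields
  set dk : ℕ → ℝ → Euc n := fun k t => (Γ k).fd (max 0 (min t (Γ k).L)) with hdk
  have hdklip : ∀ k, LipschitzWith Λ.toNNReal (dk k) := by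
    intro k
    rw [lipschitzWith_iff_dist_le_mul]
    intro a b
    have h1 := lipschitzOnWith_iff_dist_le_mul.mp (Γ k).lip _
      (clamp_mem (Γ k).Lnn a) _ (clamp_mem (Γ k).Lnn b)
    refine h1.trans ?_
    have := clamp_lip (Γ k).L a b
    rw [Real.dist_eq, Real.dist_eq]
    exact mul_le_mul_of_nonneg_left this (Λ.toNNReal).coe_nonneg
  have hdkunit : ∀ k t, ‖dk k t‖ = 1 := fun k t => (Γ k).unit _ (clamp_mem (Γ k).Lnn t)
  have hdkeq : ∀ k, ∀ t ∈ Icc (0:ℝ) ℓ, dk k t = (Γ k).fd t := by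
    intro k t ht
    rw [hdk]
    simp only
    rw [clamp_eq ⟨ht.1, ht.2.trans (hmin (Γ k))⟩]
  haveI : CompactSpace (Icc (0:ℝ) M) := isCompact_iff_compactSpace.mp isCompact_Icc
  set D : ℕ → (Icc (0:ℝ) M →ᵇ Euc n) := fun k =>
    BoundedContinuousFunction.mkOfCompact ⟨fun x => dk k x.1,
      ((hdklip k).continuous).comp continuous_subtype_val⟩ with hD
  have hDapp : ∀ k x, D k x = dk k x.1 := fun k x => rfl
  set A : Set (Icc (0:ℝ) M →ᵇ Euc n) :=
    {g | (∀ x y, dist (g x) (g y) ≤ Λ * dist x y) ∧ ∀ x, ‖g x‖ ≤ 1} with hA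
  have hAclosed : IsClosed A := by
    have : A = (⋂ x, ⋂ y, {g : Icc (0:ℝ) M →ᵇ Euc n | dist (g x) (g y) ≤ Λ * dist x y}) ∩
        ⋂ x, {g : Icc (0:ℝ) M →ᵇ Euc n | ‖g x‖ ≤ 1} := by
      ext g
      simp only [hA, Set.mem_setOf_eq, Set.mem_inter_iff, Set.mem_iInter]
    rw [this]
    refine IsClosed.inter (isClosed_iInter fun x => isClosed_iInter fun y => ?_)
      (isClosed_iInter fun x => ?_)
    · exact isClosed_le (Continuous.dist
        (continuous_eval_const x)
        (continuous_eval_const y)) continuous_const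
    · exact isClosed_le (continuous_eval_const x).norm continuous_const
  have hAcomp : IsCompact A := by
    refine BoundedContinuousFunction.arzela_ascoli₂ (Metric.closedBall 0 1)
      (isCompact_closedBall 0 1) A hAclosed (fun g x hg => ?_) ?_
    · rw [Metric.mem_closedBall, dist_zero_right]
      exact hg.2 x
    · apply Metric.equicontinuous_of_continuity_modulus (b := fun d => Λ * d)
      · have : Tendsto (fun d : ℝ => Λ * d) (𝓝 0) (𝓝 (Λ * 0)) :=
          (continuous_const.mul continuous_id).tendsto 0
        simpa using this
      · exact fun x y i => i.2.1 x y
  have hDmem : ∀ k, D k ∈ A := by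
    intro k
    constructor
    · intro x y
      rw [hDapp, hDapp]
      have := lipschitzWith_iff_dist_le_mul.mp (hdklip k) x.1 y.1
      rwa [hcoe, ← Subtype.dist_eq] at this
    · intro x
      rw [hDapp]
      exact le_of_eq (hdkunit k x.1)
  obtain ⟨d, hdA, φ, hφmono, hφtend⟩ := hAcomp.tendsto_subseq hDmem
  have hdist0 : Tendsto (fun k => dist (D (φ k)) d) atTop (𝓝 0) := by
    rwa [tendsto_iff_dist_tendsto_zero] at hφtend
  have hpt : ∀ x : Icc (0:ℝ) M, Tendsto (fun k => D (φ k) x) atTop (𝓝 (d x)) := by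
    intro x
    rw [tendsto_iff_dist_tendsto_zero]
    exact squeeze_zero (fun _ => dist_nonneg)
      (fun k => BoundedContinuousFunction.dist_coe_le_dist x) hdist0
  have hL : Tendsto (fun k => (Γ k).L) atTop (𝓝 ℓ) := by
    refine tendsto_of_tendsto_of_tendsto_of_le_of_le tendsto_const_nhds ?_
      (fun k => hmin (Γ k)) (fun k => (hΓ k).le)
    have := tendsto_one_div_add_atTop_nhds_zero_nat (𝕜 := ℝ)
    have h2 := (tendsto_const_nhds (x := ℓ) (f := atTop (α := ℕ))).add this
    simpa using h2
  have hLφ : Tendsto (fun k => (Γ (φ k)).L) atTop (𝓝 ℓ) := hL.comp hφmono.tendsto_atTop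
  -- limit objects
  set dd : ℝ → Euc n := fun t => d (projIcc 0 M hM0 t) with hdd
  have hddcont : Continuous dd := d.continuous.comp continuous_projIcc
  have hddeq : ∀ t (ht : t ∈ Icc (0:ℝ) M), dd t = d ⟨t, ht⟩ := by
    intro t ht
    rw [hdd]
    simp only
    rw [projIcc_of_mem hM0 ht]
  have hlim : ∀ t (ht : t ∈ Icc (0:ℝ) M),
      Tendsto (fun k => dk (φ k) t) atTop (𝓝 (dd t)) := by
    intro t ht
    have := hpt ⟨t, ht⟩
    simp only [hDapp] at this
    rwa [← hddeq t ht] at this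
  -- properties of dd
  have hmemℓ : ∀ t, t ∈ Icc (0:ℝ) ℓ → t ∈ Icc (0:ℝ) M := fun t ht => ⟨ht.1, ht.2.trans hℓM⟩
  have hddunit : ∀ s ∈ Icc (0:ℝ) ℓ, ‖dd s‖ = 1 := by
    intro s hs
    have h1 := (hlim s (hmemℓ s hs)).norm
    have h2 : Tendsto (fun k => ‖dk (φ k) s‖) atTop (𝓝 1) := by
      simp only [hdkunit]
      exact tendsto_const_nhds
    exact tendsto_nhds_unique h1 h2
  have hddlip : LipschitzOnWith Λ.toNNReal dd (Icc 0 ℓ) := by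
    rw [lipschitzOnWith_iff_dist_le_mul]
    intro x hx y hy
    rw [hddeq x (hmemℓ x hx), hddeq y (hmemℓ y hy), hcoe]
    refine (hdA.1 ⟨x, _⟩ ⟨y, _⟩).trans ?_
    rw [Subtype.dist_eq]
  have hdd0 : dd 0 = v := by
    refine tendsto_nhds_unique (hlim 0 (hmemℓ 0 ⟨le_rfl, hℓ0⟩)) ?_
    have : ∀ k, dk (φ k) 0 = v := by
      intro k
      rw [hdkeq (φ k) 0 ⟨le_rfl, hℓ0⟩, (Γ (φ k)).id0]
    simp only [this]
    exact tendsto_const_nhds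
  have hddℓ : dd ℓ = w := by
    refine tendsto_nhds_unique (hlim ℓ (hmemℓ ℓ ⟨hℓ0, le_rfl⟩)) ?_
    have heq : ∀ k, dk (φ k) ℓ = (Γ (φ k)).fd ℓ := fun k => hdkeq (φ k) ℓ ⟨hℓ0, le_rfl⟩
    rw [tendsto_iff_dist_tendsto_zero]
    have hb : ∀ k, dist (dk (φ k) ℓ) w ≤ Λ * dist ℓ (Γ (φ k)).L := by
      intro k
      have hlb := lipschitzOnWith_iff_dist_le_mul.mp (Γ (φ k)).lip ℓ
        ⟨hℓ0, hmin (Γ (φ k))⟩ (Γ (φ k)).L ⟨(Γ (φ k)).Lnn, le_rfl⟩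
      rw [hcoe] at hlb
      calc dist (dk (φ k) ℓ) w
          = dist ((Γ (φ k)).fd ℓ) ((Γ (φ k)).fd (Γ (φ k)).L) := by
            rw [(Γ (φ k)).idL, heq k]
        _ ≤ Λ * dist ℓ (Γ (φ k)).L := hlb
    refine squeeze_zero (fun _ => dist_nonneg) hb ?_
    have h2 : Tendsto (fun k => dist ℓ (Γ (φ k)).L) atTop (𝓝 (dist ℓ ℓ)) :=
      Filter.Tendsto.dist tendsto_const_nhds hLφ
    rw [dist_self] at h2
    have := tendsto_const_nhds (x := Λ) (f := atTop (α := ℕ)) |>.mul h2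
    simpa using this
  -- the integral identity
  have hIint : ∀ a b : ℝ, IntervalIntegrable dd volume a b := fun a b =>
    hddcont.intervalIntegrable a b
  have hdkcont : ∀ k, Continuous (dk k) := fun k => (hdklip k).continuous
  have hIq : ∫ t in (0:ℝ)..ℓ, dd t = q - p := by
    have hbound : ∀ k, ‖(∫ t in (0:ℝ)..ℓ, dd t) - (q - p)‖ ≤
        dist (D (φ k)) d * ℓ + 1 * |(Γ (φ k)).L - ℓ| := by
      intro k
      set j := φ k
      have hI1 : ∫ t in (0:ℝ)..(Γ j).L, dk j t = q - p := by
        rw [← curve_integral (Γ j)]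
        apply intervalIntegral.integral_congr
        intro t ht
        rw [uIcc_of_le (Γ j).Lnn] at ht
        rw [hdk]
        simp only
        rw [clamp_eq ht]
      have hsplit : (∫ t in (0:ℝ)..ℓ, dk j t) + ∫ t in ℓ..(Γ j).L, dk j t = q - p := by
        rw [intervalIntegral.integral_add_adjacent_intervals
          ((hdkcont j).intervalIntegrable _ _) ((hdkcont j).intervalIntegrable _ _), hI1]
      have hterm1 : ‖(∫ t in (0:ℝ)..ℓ, dd t) - ∫ t in (0:ℝ)..ℓ, dk j t‖ ≤
          dist (D j) d * ℓ := by
        rw [← intervalIntegral.integral_sub (hIint 0 ℓ) ((hdkcont j).intervalIntegrable _ _)]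
        have := intervalIntegral.norm_integral_le_of_norm_le_const
          (C := dist (D j) d) (f := fun t => dd t - dk j t) (a := (0:ℝ)) (b := ℓ) ?_
        · rwa [sub_zero, abs_of_nonneg hℓ0] at this
        · intro x hx
          rw [uIoc_of_le hℓ0] at hx
          have hxM : x ∈ Icc (0:ℝ) M := hmemℓ x ⟨hx.1.le, hx.2⟩
          show ‖dd x - dk j x‖ ≤ dist (D j) d
          rw [hddeq x hxM]
          have h1 : dk j x = D j ⟨x, hxM⟩ := (hDapp j ⟨x, hxM⟩).symm
          rw [h1, ← dist_eq_norm, dist_comm]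
          exact BoundedContinuousFunction.dist_coe_le_dist _
      have hterm2 : ‖∫ t in ℓ..(Γ j).L, dk j t‖ ≤ 1 * |(Γ j).L - ℓ| := by
        apply intervalIntegral.norm_integral_le_of_norm_le_const
        intro x _
        exact le_of_eq (hdkunit j x)
      calc ‖(∫ t in (0:ℝ)..ℓ, dd t) - (q - p)‖
          = ‖((∫ t in (0:ℝ)..ℓ, dd t) - ∫ t in (0:ℝ)..ℓ, dk j t) -
            (∫ t in ℓ..(Γ j).L, dk j t)‖ := by rw [← hsplit]; congr 1; abel
        _ ≤ ‖(∫ t in (0:ℝ)..ℓ, dd t) - ∫ t in (0:ℝ)..ℓ, dk j t‖ +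
            ‖∫ t in ℓ..(Γ j).L, dk j t‖ := norm_sub_le _ _
        _ ≤ dist (D j) d * ℓ + 1 * |(Γ j).L - ℓ| := add_le_add hterm1 hterm2
    have htend : Tendsto (fun k => dist (D (φ k)) d * ℓ + 1 * |(Γ (φ k)).L - ℓ|)
        atTop (𝓝 (0 * ℓ + 1 * |ℓ - ℓ|)) := by
      refine Filter.Tendsto.add (hdist0.mul tendsto_const_nhds) ?_
      refine Filter.Tendsto.mul tendsto_const_nhds ?_
      have : Tendsto (fun k => (Γ (φ k)).L - ℓ) atTop (𝓝 (ℓ - ℓ)) :=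
        hLφ.sub tendsto_const_nhds
      exact this.abs
    rw [sub_self, abs_zero] at htend
    simp only [zero_mul, mul_zero, add_zero] at htend
    have hle : ‖(∫ t in (0:ℝ)..ℓ, dd t) - (q - p)‖ ≤ 0 :=
      ge_of_tendsto' htend hbound
    rw [← sub_eq_zero]
    exact norm_le_zero_iff.mp hle
  -- assemble the minimizing curve
  refine ⟨⟨ℓ, hℓ0, fun s => p + ∫ t in (0:ℝ)..s, dd t, dd, ?_, hddunit, hddlip, ?_, hdd0, ?_,
    hddℓ⟩, hmin⟩
  · intro s _
    have hder : HasDerivAt (fun u => ∫ t in (0:ℝ)..u, dd t) (dd s) s :=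
      intervalIntegral.integral_hasDerivAt_right (hIint 0 s)
        hddcont.stronglyMeasurable.stronglyMeasurableAtFilter
        hddcont.continuousAt
    exact (hder.const_add p).hasDerivWithinAt
  · simp
  · show p + (∫ t in (0:ℝ)..ℓ, dd t) = q
    rw [hIq]
    abel

end PartA

/-- The class `C(p,q;v,w;Λ)` is nonempty and contains a curve of minimal
length. -/
theorem statement_12 {n : ℕ} (hn : 2 ≤ n) (p q v w : Euc n)
    (hv : ‖v‖ = 1) (hw : ‖w‖ = 1) (Λ : ℝ) (hΛ : 0 < Λ) :
    ∃ γ₀ : CurveCC n p q v w Λ, ∀ γ : CurveCC n p q v w Λ, γ₀.L ≤ γ.L :=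
  statement_12' hn p q v w hv hw Λ hΛ
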